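/- arXiv:1909.11724 — 2 statements merged into one kernel-verified Lean document; each statement's English description precedes it below -/
import Mathlib

section
/- Let C be a category with finite products, equipped with its Cartesian monoidal structure, and let X be an object of C regarded as a comonoid object via the diagonal comultiplication X → X × X and the counit given by the unique map to the terminal object. Then the category of (left) comodule objects over this comonoid in C — defined as the opposite of the category of module objects over X (with its codiagonal monoid structure) in the opposite category Cᵒᵖ with its coCartesian monoidal structure — is equivalent to the slice category C/X of objects of C over X; the equivalence sends a comodule (M, c : M → X × M) to the object M equipped with the structure morphism M → X obtained by composing the coaction c with the projection X × M → X. -/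
open CategoryTheory CategoryTheory.Limits CategoryTheory.MonoidalCategory

attribute [local instance] CategoryTheory.monoidalOfHasFiniteCoproducts

universe v u

section Aux

variable {C : Type u} [Category.{v} C] [HasFiniteProducts C]
variable (M : Mon Cᵒᵖ)

theorem aux_inr_act (h_one : MonObj.one (X := M.X) = initial.to M.X) (N : Mod Cᵒᵖ M.X) :
    (coprod.inr : N.X ⟶ M.X ⨿ N.X) ≫ (ModObj.smul (M := M.X) (X := N.X) : M.X ⊗ N.X ⟶ N.X) = 𝟙 N.X := by
  have h := ModObj.one_smul (M := M.X) N.X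
  simp only [selfLeftAction_actionHomLeft, selfLeftAction_actionUnitIso] at h
  rw [h_one] at h
  have := congrArg (fun g => (coprod.inr : N.X ⟶ _) ≫ g) h
  simp only [monoidalOfHasFiniteCoproducts.whiskerRight,
    monoidalOfHasFiniteCoproducts.leftUnitor_hom] at this
  rw [coprod.inr_map_assoc, coprod.inr_desc] at this
  simpa using this

theorem aux_act_eq (h_one : MonObj.one (X := M.X) = initial.to M.X) (N : Mod Cᵒᵖ M.X) :
    (ModObj.smul (M := M.X) (X := N.X) : M.X ⊗ N.X ⟶ N.X) = coprod.desc (coprod.inl ≫ (ModObj.smul (M := M.X) (X := N.X) : M.X ⊗ N.X ⟶ N.X)) (𝟙 N.X) := by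
  apply coprod.hom_ext
  · simp only [coprod.inl_desc]
  · rw [coprod.inr_desc, aux_inr_act M h_one N]

end Aux

section Aux2

variable {C : Type u} [Category.{v} C] [HasFiniteProducts C]
variable (M : Mon Cᵒᵖ)

/-- forward functor -/
@[simps]
noncomputable def auxFunctor : (Mod Cᵒᵖ M.X)ᵒᵖ ⥤ Over (M.X.unop) where
  obj N := Over.mk ((coprod.inl ≫ (ModObj.smul (M := M.X) (X := N.unop.X) : M.X ⊗ N.unop.X ⟶ N.unop.X) : M.X ⟶ N.unop.X).unop)
  map {N N'} φ := Over.homMk (φ.unop.hom.unop) (by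
    show φ.unop.hom.unop ≫ (coprod.inl ≫ (ModObj.smul (M := M.X) (X := N'.unop.X) : M.X ⊗ N'.unop.X ⟶ N'.unop.X)).unop = (coprod.inl ≫ (ModObj.smul (M := M.X) (X := N.unop.X) : M.X ⊗ N.unop.X ⟶ N.unop.X)).unop
    rw [← unop_comp]
    congr 1
    rw [Category.assoc, IsModHom.smul_hom]
    simp only [selfLeftAction_actionHomRight]
    simp [monoidalOfHasFiniteCoproducts.whiskerLeft])

variable (h_one : MonObj.one (X := M.X) = initial.to M.X) (h_mul : MonObj.mul (X := M.X) = codiag M.X)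

/-- backward functor -/
@[simps]
noncomputable def auxInverse : Over (M.X.unop) ⥤ (Mod Cᵒᵖ M.X)ᵒᵖ where
  obj f := Opposite.op
    { X := Opposite.op f.left
      mod := {
      smul := (coprod.desc f.hom.op (𝟙 (Opposite.op f.left)) : M.X ⨿ Opposite.op f.left ⟶ _)
      one_smul := by
        simp only [selfLeftAction_actionHomLeft, selfLeftAction_actionUnitIso]
        rw [h_one]
        apply coprod.hom_ext <;>
          simp only [monoidalOfHasFiniteCoproducts.whiskerRight,
            monoidalOfHasFiniteCoproducts.leftUnitor_hom, coprod.inl_map_assoc,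
            coprod.inr_map_assoc, coprod.inl_desc, coprod.inr_desc, initial.to_comp, Category.id_comp,
            Category.comp_id]
      mul_smul := by
        simp only [selfLeftAction_actionHomLeft, selfLeftAction_actionHomRight,
          selfLeftAction_actionAssocIso]
        rw [h_mul]
        apply coprod.hom_ext
        · apply coprod.hom_ext <;>
            simp only [monoidalOfHasFiniteCoproducts.whiskerRight,
              monoidalOfHasFiniteCoproducts.whiskerLeft, codiag,
              monoidalOfHasFiniteCoproducts.associator_hom, coprod.inl_map_assoc, coprod.inr_map_assoc, coprod.inl_desc_assoc, coprod.inr_desc_assoc, coprod.inl_desc, coprod.inr_desc, Category.id_comp, Category.comp_id, Category.assoc]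
        · simp only [monoidalOfHasFiniteCoproducts.whiskerRight,
            monoidalOfHasFiniteCoproducts.whiskerLeft, codiag,
            monoidalOfHasFiniteCoproducts.associator_hom, coprod.inl_map_assoc, coprod.inr_map_assoc, coprod.inl_desc_assoc, coprod.inr_desc_assoc, coprod.inl_desc, coprod.inr_desc, Category.id_comp, Category.comp_id, Category.assoc] } }
  map {f f'} g := Quiver.Hom.op
    (Mod.Hom.mk' g.left.op (by
        simp only [selfLeftAction_actionHomRight]
        apply coprod.hom_ext
        · erw [coprod.inl_desc_assoc]
          rw [← op_comp, Over.w g]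
          simp only [monoidalOfHasFiniteCoproducts.whiskerLeft, coprod.inl_map_assoc, Category.id_comp]
          erw [coprod.inl_desc]
        · simp only [monoidalOfHasFiniteCoproducts.whiskerLeft, coprod.inr_map_assoc]
          erw [coprod.inr_desc_assoc, coprod.inr_desc]
          simp only [Category.id_comp, Category.comp_id]))
  map_id f := by
    apply Quiver.Hom.unop_inj
    ext
    rfl
  map_comp g h := by
    apply Quiver.Hom.unop_inj
    ext
    rfl

end Aux2

section Aux3

variable {C : Type u} [Category.{v} C] [HasFiniteProducts C]
variable (M : Mon Cᵒᵖ)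
variable (h_one : MonObj.one (X := M.X) = initial.to M.X) (h_mul : MonObj.mul (X := M.X) = codiag M.X)

noncomputable def auxUnitIso :
    𝟭 (Mod Cᵒᵖ M.X)ᵒᵖ ≅ auxFunctor M ⋙ auxInverse M h_one h_mul :=
  NatIso.ofComponents
    (fun N =>
      { hom := Quiver.Hom.op
          (Mod.Hom.mk' (𝟙 N.unop.X) (by
              erw [Category.comp_id, MonoidalLeftAction.actionHomRight_id, Category.id_comp]
              exact (aux_act_eq M h_one N.unop).symm))
        inv := Quiver.Hom.op
          (Mod.Hom.mk' (𝟙 N.unop.X) (by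
              erw [Category.comp_id, MonoidalLeftAction.actionHomRight_id, Category.id_comp]
              exact aux_act_eq M h_one N.unop))
        hom_inv_id := by
          apply Quiver.Hom.unop_inj
          ext
          exact Category.id_comp _
        inv_hom_id := by
          apply Quiver.Hom.unop_inj
          ext
          exact Category.id_comp _ })
    (fun φ => by
      apply Quiver.Hom.unop_inj
      ext
      exact (Category.id_comp _).trans (Category.comp_id _).symm)

noncomputable def auxCounitIso :
    auxInverse M h_one h_mul ⋙ auxFunctor M ≅ 𝟭 (Over M.X.unop) :=
  NatIso.ofComponents
    (fun f => Over.isoMk (Iso.refl _) (by dsimp [auxFunctor, auxInverse]; rw [← unop_comp]; erw [coprod.inl_desc]; simp only [Category.id_comp, Quiver.Hom.unop_op]))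
    (fun g => by
      ext
      simp [auxFunctor, auxInverse])

noncomputable def auxEquiv : (Mod Cᵒᵖ M.X)ᵒᵖ ≌ Over (M.X.unop) :=
  CategoryTheory.Equivalence.mk (auxFunctor M) (auxInverse M h_one h_mul)
    (auxUnitIso M h_one h_mul) (auxCounitIso M h_one h_mul)

end Aux3

/-- Let `C` be a category with finite products, with its Cartesian monoidal structure, and let
`X` be an object of `C` regarded as a comonoid via the diagonal comultiplication and the counit
to the terminal object; i.e. `M : Mon_ Cᵒᵖ` is `op X` with the codiagonal monoid structure in
`Cᵒᵖ` (equipped with its coCartesian monoidal structure).  Then the category of left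
`X`-comodules, namely `(Mod_ M)ᵒᵖ`, is equivalent to the slice category `C/X`, via the functor
sending a comodule with coaction `c : N ⟶ X × N` to `N` equipped with the composite of `c` with
the projection `X × N ⟶ X` (which, in `Cᵒᵖ`, is the coproduct inclusion). -/
theorem statement2 {C : Type u} [Category.{v} C] [HasFiniteProducts C]
    (X : C) (M : Mon Cᵒᵖ) (hX : M.X = Opposite.op X)
    (h_one : MonObj.one (X := M.X) = initial.to M.X) (h_mul : MonObj.mul (X := M.X) = codiag M.X) :
    ∃ e : (Mod Cᵒᵖ M.X)ᵒᵖ ≌ Over X,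
      ∀ N : (Mod Cᵒᵖ M.X)ᵒᵖ,
        e.functor.obj N =
          Over.mk (((ModObj.smul (M := M.X) (X := N.unop.X) : M.X ⊗ N.unop.X ⟶ N.unop.X).unop ≫ (coprod.inl : M.X ⟶ M.X ⊗ N.unop.X).unop) ≫
            eqToHom (congrArg Opposite.unop hX)) := by
  have hX' : X = M.X.unop := by rw [hX]
  subst hX'
  refine ⟨auxEquiv M h_one h_mul, fun N => ?_⟩
  show (auxFunctor M).obj N = _
  exact congrArg Over.mk (by simp)
end

section
/- Let C be a category with finite coproducts, equipped with its coCartesian monoidal structure, and let a and b be objects of C, each regarded as a monoid object via the codiagonal multiplication and the unit from the initial object. Then the category of (a, b)-bimodule objects in C is equivalent to the coslice category (a ⨿ b)/C of objects of C under the coproduct a ⨿ b; equivalently, it is equivalent to the category of cospans a → M ← b in C. The equivalence sends a bimodule M with left action l : a ⨿ M → M and right action r : M ⨿ b → M to the cospan whose legs are the composites a → a ⨿ M → M and b → M ⨿ b → M of the coproduct inclusions with the two actions. -/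
open CategoryTheory CategoryTheory.Limits CategoryTheory.MonoidalCategory

attribute [local instance] CategoryTheory.monoidalOfHasFiniteCoproducts

universe v u

section Aux

variable {C : Type u} [Category.{v} C] [HasFiniteCoproducts C]

open CategoryTheory.monoidalOfHasFiniteCoproducts

@[simp] theorem statement3_tensorUnit : (𝟙_ C) = ⊥_ C := rfl

/-- The bimodule associated to an object under `A.X ⨿ B.X`. -/
@[simps]
noncomputable def statement3GObj (A B : Mon C)
    (hA_one : A.mon.one = initial.to A.X) (hA_mul : A.mon.mul = codiag A.X)
    (hB_one : B.mon.one = initial.to B.X) (hB_mul : B.mon.mul = codiag B.X)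
    (U : Under (A.X ⨿ B.X)) : Bimod A B where
  X := U.right
  actLeft := coprod.desc (coprod.inl ≫ U.hom) (𝟙 U.right)
  actRight := coprod.desc (𝟙 U.right) (coprod.inr ≫ U.hom)
  one_actLeft := by
    apply coprod.hom_ext
    · apply initial.hom_ext
    · simp [hA_one]
  left_assoc := by
    apply coprod.hom_ext
    · apply coprod.hom_ext <;> simp [hA_mul, monoidalOfHasFiniteCoproducts.associator_hom, coprod.inl_desc, coprod.inr_desc, coprod.inl_desc_assoc, coprod.inr_desc_assoc]
    · simp [hA_mul, monoidalOfHasFiniteCoproducts.associator_hom, coprod.inl_desc, coprod.inr_desc, coprod.inl_desc_assoc, coprod.inr_desc_assoc]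
  actRight_one := by
    apply coprod.hom_ext
    · simp [hB_one]
    · apply initial.hom_ext
  right_assoc := by
    apply coprod.hom_ext
    · simp [hB_mul, monoidalOfHasFiniteCoproducts.associator_inv, coprod.inl_desc, coprod.inr_desc, coprod.inl_desc_assoc, coprod.inr_desc_assoc]
    · apply coprod.hom_ext <;> simp [hB_mul, monoidalOfHasFiniteCoproducts.associator_inv, coprod.inl_desc, coprod.inr_desc, coprod.inl_desc_assoc, coprod.inr_desc_assoc]
  middle_assoc := by
    apply coprod.hom_ext
    · apply coprod.hom_ext <;> simp [monoidalOfHasFiniteCoproducts.associator_hom, coprod.inl_desc, coprod.inr_desc, coprod.inl_desc_assoc, coprod.inr_desc_assoc]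
    · simp [monoidalOfHasFiniteCoproducts.associator_hom, coprod.inl_desc, coprod.inr_desc, coprod.inl_desc_assoc, coprod.inr_desc_assoc]

/-- The forward functor. -/
noncomputable def statement3F (A B : Mon C) : Bimod A B ⥤ Under (A.X ⨿ B.X) where
  obj N := Under.mk (coprod.desc
      ((coprod.inl : A.X ⟶ A.X ⊗ N.X) ≫ N.actLeft)
      ((coprod.inr : B.X ⟶ N.X ⊗ B.X) ≫ N.actRight))
  map {M N} f := Under.homMk f.hom (by
    apply coprod.hom_ext <;> simp)
  map_id N := by ext; simp
  map_comp f g := by ext; simp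

/-- The inverse functor. -/
noncomputable def statement3G (A B : Mon C)
    (hA_one : A.mon.one = initial.to A.X) (hA_mul : A.mon.mul = codiag A.X)
    (hB_one : B.mon.one = initial.to B.X) (hB_mul : B.mon.mul = codiag B.X) :
    Under (A.X ⨿ B.X) ⥤ Bimod A B where
  obj U := statement3GObj A B hA_one hA_mul hB_one hB_mul U
  map {U V} f :=
    { hom := f.right
      left_act_hom := by
        apply coprod.hom_ext <;> simp [statement3GObj]
      right_act_hom := by
        apply coprod.hom_ext <;> simp [statement3GObj] }
  map_id U := by ext; simp; rfl
  map_comp f g := by ext; simp; rfl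

end Aux

open CategoryTheory.monoidalOfHasFiniteCoproducts in
/-- Let `C` be a category with finite coproducts with its coCartesian monoidal structure, and
let `a` and `b` be objects of `C`, each regarded as a monoid object (`A` and `B`) via the
codiagonal multiplication and the unit from the initial object.  Then the category of
`(A, B)`-bimodule objects in `C` is equivalent to the coslice category `(a ⨿ b)/C`
(equivalently, the category of cospans `a ⟶ N ⟵ b`), via the functor sending a bimodule `N`
with left action `l` and right action `r` to the map out of `a ⨿ b` whose components are the
composites of the coproduct inclusions with the two actions. -/
theorem statement3 {C : Type u} [Category.{v} C] [HasFiniteCoproducts C]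
    (A B : Mon C)
    (hA_one : A.mon.one = initial.to A.X) (hA_mul : A.mon.mul = codiag A.X)
    (hB_one : B.mon.one = initial.to B.X) (hB_mul : B.mon.mul = codiag B.X) :
    ∃ e : Bimod A B ≌ Under (A.X ⨿ B.X),
      ∀ N : Bimod A B,
        e.functor.obj N =
          Under.mk (coprod.desc
            ((coprod.inl : A.X ⟶ A.X ⊗ N.X) ≫ N.actLeft)
            ((coprod.inr : B.X ⟶ N.X ⊗ B.X) ≫ N.actRight)) := by
  have actL : ∀ N : Bimod A B, (coprod.inr : N.X ⟶ A.X ⊗ N.X) ≫ N.actLeft = 𝟙 N.X := by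
    intro N
    have h2 := congrArg (fun t => (coprod.inr : N.X ⟶ _) ≫ t) N.one_actLeft
    simpa [hA_one, coprod.inl_desc, coprod.inr_desc, coprod.inl_desc_assoc, coprod.inr_desc_assoc] using h2
  have actR : ∀ N : Bimod A B, (coprod.inl : N.X ⟶ N.X ⊗ B.X) ≫ N.actRight = 𝟙 N.X := by
    intro N
    have h2 := congrArg (fun t => (coprod.inl : N.X ⟶ _) ≫ t) N.actRight_one
    simpa [hB_one, coprod.inl_desc, coprod.inr_desc, coprod.inl_desc_assoc, coprod.inr_desc_assoc] using h2
  refine ⟨CategoryTheory.Equivalence.mk (statement3F A B)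
      (statement3G A B hA_one hA_mul hB_one hB_mul) ?_ ?_, fun N => rfl⟩
  · refine NatIso.ofComponents
      (fun N => Bimod.isoOfIso (Iso.refl N.X) ?_ ?_) ?_
    · apply coprod.hom_ext <;>
        dsimp [statement3F, statement3G, statement3GObj] <;> simp [actL N, coprod.inl_desc, coprod.inr_desc, coprod.inl_desc_assoc, coprod.inr_desc_assoc]
    · apply coprod.hom_ext <;>
        dsimp [statement3F, statement3G, statement3GObj] <;> simp [actR N, coprod.inl_desc, coprod.inr_desc, coprod.inl_desc_assoc, coprod.inr_desc_assoc]
    · intro M N f; ext; exact (Category.comp_id _).trans (Category.id_comp _).symm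
  · refine NatIso.ofComponents
      (fun U => Under.isoMk (Iso.refl U.right) ?_) ?_
    · apply coprod.hom_ext <;> dsimp [statement3F, statement3G, statement3GObj] <;> simp [coprod.inl_desc, coprod.inr_desc, coprod.inl_desc_assoc, coprod.inr_desc_assoc]
    · intro U V f; ext; exact (Category.comp_id _).trans (Category.id_comp _).symm
end
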